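/- arXiv:1001.2027 — 6 statements merged into one kernel-verified Lean document; each statement's English description precedes it below -/
import Mathlib

section
/- Let λ be an algebraic integer of degree d with minimal polynomial x^d + a_{d-1}x^{d-1} + ⋯ + a_0, a_0 ≠ 0. Then for all integers k ≥ i ≥ 0, the number a_0^{k-i} λ^i is an integer linear combination of λ^k, λ^{k+1}, …, λ^{k+d-1}. -/
/-- For a nonzero algebraic integer `λ` of degree `d` with minimal polynomial
`x^d + a_{d-1}x^{d-1} + ⋯ + a_0`, `a_0 ≠ 0`: for all `k ≥ i ≥ 0`, the number
`a_0^{k-i} λ^i` is an integer linear combination of `λ^k, λ^{k+1}, …, λ^{k+d-1}`. -/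
theorem a0_pow_mul_pow_lincomb
    (lam : ℝ) (hint : IsIntegral ℤ lam) (hne : lam ≠ 0)
    (d : ℕ) (hd : d = (minpoly ℤ lam).natDegree)
    (a0 : ℤ) (ha0 : a0 = (minpoly ℤ lam).coeff 0) (h0 : a0 ≠ 0) :
    ∀ k i : ℕ, i ≤ k → ∃ c : Fin d → ℤ,
      (a0 : ℝ) ^ (k - i) * lam ^ i = ∑ j : Fin d, (c j : ℝ) * lam ^ (k + (j : ℕ)) := by
  intro k i hik
  set p := minpoly ℤ lam with hp
  have hmon : p.Monic := minpoly.monic hint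
  have hd1 : 0 < d := hd ▸ minpoly.natDegree_pos hint
  have heval : ∑ j ∈ Finset.range (d + 1), (p.coeff j : ℝ) * lam ^ j = 0 := by
    have h := minpoly.aeval ℤ lam
    rw [Polynomial.aeval_eq_sum_range] at h
    rw [← hp, ← hd] at h
    simpa [zsmul_eq_mul] using h
  have hcd : p.coeff d = 1 := by rw [hd]; exact hmon.coeff_natDegree
  have hpowd : lam ^ d = ∑ j ∈ Finset.range d, (-(p.coeff j) : ℝ) * lam ^ j := by
    rw [Finset.sum_range_succ, hcd] at heval
    push_cast at heval ⊢
    simp only [neg_mul]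
    rw [Finset.sum_neg_distrib]
    linarith
  have ha0eq : ∀ m : ℕ, (a0 : ℝ) * lam ^ m
      = ∑ j ∈ Finset.range d, (-(p.coeff (j + 1)) : ℝ) * lam ^ (m + 1 + j) := by
    intro m
    rw [Finset.sum_range_succ'] at heval
    have : (a0 : ℝ) = ∑ j ∈ Finset.range d, (-(p.coeff (j + 1)) : ℝ) * lam ^ (j + 1) := by
      rw [ha0]
      push_cast
      simp only [neg_mul]
      rw [Finset.sum_neg_distrib]
      simp only [pow_zero, mul_one] at heval
      linarith
    rw [this, Finset.sum_mul]
    congr 1; funext j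
    push_cast
    ring
  set M := Submodule.span ℤ (Set.range fun j : Fin d => lam ^ (k + (j : ℕ))) with hM
  have pow_mem : ∀ t : ℕ, lam ^ (k + t) ∈ M := by
    intro t
    induction t using Nat.strong_induction_on with
    | _ t ih =>
      by_cases ht : t < d
      · exact Submodule.subset_span ⟨⟨t, ht⟩, rfl⟩
      · push_neg at ht
        obtain ⟨s, rfl⟩ : ∃ s, t = d + s := ⟨t - d, by omega⟩
        have : lam ^ (k + (d + s)) = ∑ j ∈ Finset.range d, (-(p.coeff j) : ℤ) • lam ^ (k + (s + j)) := by
          have : lam ^ (k + (d + s)) = lam ^ (k + s) * lam ^ d := by ring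
          rw [this, hpowd, Finset.mul_sum]
          congr 1; funext j
          push_cast [zsmul_eq_mul]
          ring
        rw [this]
        exact Submodule.sum_mem _ fun j hj => Submodule.smul_mem _ _
          (ih (s + j) (by have := Finset.mem_range.mp hj; omega))
  have key : ∀ n m : ℕ, k ≤ n + m → (a0 : ℝ) ^ n * lam ^ m ∈ M := by
    intro n
    induction n with
    | zero =>
      intro m hm
      obtain ⟨t, rfl⟩ : ∃ t, m = k + t := ⟨m - k, by omega⟩
      simpa using pow_mem t
    | succ n ih =>
      intro m hm
      have : (a0 : ℝ) ^ (n + 1) * lam ^ m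
          = ∑ j ∈ Finset.range d, (-(p.coeff (j + 1)) : ℤ) • ((a0 : ℝ) ^ n * lam ^ (m + 1 + j)) := by
        have h1 : (a0 : ℝ) ^ (n + 1) * lam ^ m = (a0 : ℝ) ^ n * ((a0 : ℝ) * lam ^ m) := by ring
        rw [h1, ha0eq m, Finset.mul_sum]
        congr 1; funext j
        push_cast [zsmul_eq_mul]
        ring
      rw [this]
      exact Submodule.sum_mem _ fun j hj => Submodule.smul_mem _ _ (ih (m + 1 + j) (by omega))
  have hmem : (a0 : ℝ) ^ (k - i) * lam ^ i ∈ M := key (k - i) i (by omega)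
  rw [hM, Submodule.mem_span_range_iff_exists_fun] at hmem
  obtain ⟨c, hc⟩ := hmem
  exact ⟨c, by rw [← hc]; congr 1; funext j; push_cast [zsmul_eq_mul]; ring⟩
end

section
/- Let p(x) be the minimal polynomial over ℚ of a Pisot number λ of degree d, with constant coefficient a_0 and derivative p'. Let q(x) be a polynomial with integer coefficients, k ≥ 0 an integer, and suppose q(λ)/(a_0^k p'(λ)) = n/m for coprime integers n, m with m > 0. Then m divides a_0^k · g, where g is the greatest common divisor of the coefficients of p'. -/
/-- A Pisot number: a real algebraic integer `> 1` all of whose algebraic conjugates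
other than itself have absolute value strictly less than `1`. -/
def IsPisot (x : ℝ) : Prop :=
  IsIntegral ℤ x ∧ 1 < x ∧
    ∀ z : ℂ, Polynomial.aeval z (minpoly ℤ x) = 0 → z ≠ (x : ℂ) → ‖z‖ < 1

/-- Let `λ` be a Pisot number of degree `d`, with minimal polynomial `p` having
constant coefficient `a_0` and derivative `p'`. If `q ∈ ℤ[x]`, `k ≥ 0`, and
`q(λ)/(a_0^k p'(λ)) = n/m` for coprime integers `n, m` with `m > 0`, then `m`
divides `a_0^k · g`, where `g` is the gcd of the coefficients of `p'`. -/
theorem denominator_dvd_a0_pow_mul_content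
    (lam : ℝ) (hp : IsPisot lam) (d : ℕ) (hd : d = (minpoly ℤ lam).natDegree)
    (a0 : ℤ) (ha0 : a0 = (minpoly ℤ lam).coeff 0)
    (q : Polynomial ℤ) (k : ℕ) (n m : ℤ) (hm : 0 < m) (hcop : Int.gcd n m = 1)
    (h : (Polynomial.aeval lam q) /
        ((a0 : ℝ) ^ k * Polynomial.aeval lam (Polynomial.derivative (minpoly ℤ lam)))
        = (n : ℝ) / (m : ℝ)) :
    m ∣ a0 ^ k * (Polynomial.derivative (minpoly ℤ lam)).content := by
  set p := minpoly ℤ lam with hpdef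
  have hint : IsIntegral ℤ lam := hp.1
  have hmonic : p.Monic := minpoly.monic hint
  have hm0 : (m : ℝ) ≠ 0 := Int.cast_ne_zero.mpr hm.ne'
  by_cases hD : ((a0 : ℝ) ^ k * Polynomial.aeval lam (Polynomial.derivative p)) = 0
  · rw [hD, div_zero] at h
    have hn : (n : ℝ) = 0 := by
      rcases (div_eq_zero_iff.mp h.symm) with h' | h'
      · exact h'
      · exact absurd h' hm0
    have hn' : n = 0 := by exact_mod_cast hn
    have : m = 1 := by
      have := hcop
      rw [hn'] at this
      simp [Int.gcd] at this
      omega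
    simp [this]
  · rw [div_eq_div_iff hD hm0] at h
    set F : Polynomial ℤ := Polynomial.C m * q -
      Polynomial.C (n * a0 ^ k) * Polynomial.derivative p with hF
    have hFroot : Polynomial.aeval lam F = 0 := by
      simp only [hF, map_sub, map_mul, Polynomial.aeval_C, eq_intCast, map_intCast, map_pow]
      push_cast
      linear_combination h
    have hdvd : p ∣ F := minpoly.isIntegrallyClosed_dvd hint hFroot
    have hmod : F %ₘ p = 0 := (Polynomial.modByMonic_eq_zero_iff_dvd hmonic).mpr hdvd
    have hsmall : (Polynomial.C (n * a0 ^ k) * Polynomial.derivative p) %ₘ p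
        = Polynomial.C (n * a0 ^ k) * Polynomial.derivative p := by
      rw [Polynomial.modByMonic_eq_self_iff hmonic]
      calc (Polynomial.C (n * a0 ^ k) * Polynomial.derivative p).degree
          ≤ (Polynomial.C (n * a0 ^ k)).degree + (Polynomial.derivative p).degree :=
            Polynomial.degree_mul_le _ _
        _ ≤ 0 + (Polynomial.derivative p).degree := by
            gcongr; exact Polynomial.degree_C_le
        _ = (Polynomial.derivative p).degree := by rw [zero_add]
        _ < p.degree := Polynomial.degree_derivative_lt hmonic.ne_zero
    have heq : Polynomial.C (n * a0 ^ k) * Polynomial.derivative p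
        = Polynomial.C m * (q %ₘ p) := by
      have h1 : (Polynomial.C m * q) %ₘ p = Polynomial.C m * (q %ₘ p) := by
        rw [← Polynomial.smul_eq_C_mul, ← Polynomial.smul_eq_C_mul,
          Polynomial.smul_modByMonic]
      rw [hF, Polynomial.sub_modByMonic, h1, hsmall, sub_eq_zero] at hmod
      rw [← hmod]
    have hcont := congrArg Polynomial.content heq
    rw [Polynomial.content_C_mul, Polynomial.content_C_mul] at hcont
    have hmn : m ∣ normalize (n * a0 ^ k) * (Polynomial.derivative p).content := by
      rw [hcont]
      exact Dvd.dvd.mul_right (dvd_normalize_iff.mpr dvd_rfl) _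
    have hmn2 : m ∣ n * (a0 ^ k * (Polynomial.derivative p).content) := by
      have : normalize (n * a0 ^ k) ∣ n * a0 ^ k := normalize_dvd_iff.mpr dvd_rfl
      calc m ∣ normalize (n * a0 ^ k) * (Polynomial.derivative p).content := hmn
        _ ∣ (n * a0 ^ k) * (Polynomial.derivative p).content := mul_dvd_mul_right this _
        _ = n * (a0 ^ k * (Polynomial.derivative p).content) := by ring
    have hco : IsCoprime (m : ℤ) n := (Int.isCoprime_iff_gcd_eq_one.mpr hcop).symm
    exact hco.dvd_of_dvd_mul_left hmn2
end

section
/- Let M be a 2m×2m integer matrix of block form [[A, B], [B, A]] whose characteristic polynomial (over ℚ) equals x^r (x - N)(x - 1)^s for some integers r, s ≥ 0 with r + s + 1 = 2m, where N is an even integer. Then s is even. (Equivalently: such a matrix cannot have N with multiplicity one and 1 with odd multiplicity as its only nonzero eigenvalues when N is even.) -/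
open Polynomial

lemma nextCoeff_rhs (N : ℚ) (r s : ℕ) :
    (X ^ r * (X - C N) * (X - 1) ^ s : ℚ[X]).nextCoeff = -(N + s) := by
  have h1 : (X ^ r : ℚ[X]).Monic := monic_X_pow r
  have h2 : ((X - C N : ℚ[X])).Monic := monic_X_sub_C N
  have h3 : ((X - 1 : ℚ[X]) ^ s).Monic := (monic_X_sub_C (1 : ℚ)).pow s
  have e1 : ((1 : ℚ[X])) = C (1 : ℚ) := by simp
  have hx : (X ^ r : ℚ[X]).nextCoeff = 0 := by
    rw [Polynomial.Monic.nextCoeff_pow monic_X]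
    simp [nextCoeff]
  rw [Polynomial.Monic.nextCoeff_mul (h1.mul h2) h3,
    Polynomial.Monic.nextCoeff_mul h1 h2, hx, nextCoeff_X_sub_C, e1,
    Polynomial.Monic.nextCoeff_pow (monic_X_sub_C 1), nextCoeff_X_sub_C]
  ring

/-- Let `M = [[A,B],[B,A]]` be a `2m × 2m` integer block matrix whose characteristic
polynomial over `ℚ` is `x^r (x - N)(x - 1)^s` with `r + s + 1 = 2m` and `N` an even
integer. Then `s` is even. -/
theorem even_multiplicity_of_one
    (m : ℕ) (A B : Matrix (Fin m) (Fin m) ℤ) (N : ℤ) (hN : Even N)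
    (r s : ℕ) (hrs : r + s + 1 = 2 * m)
    (hchar : ((Matrix.fromBlocks A B B A).map (Int.cast : ℤ → ℚ)).charpoly =
      Polynomial.X ^ r * (Polynomial.X - Polynomial.C (N : ℚ)) *
        (Polynomial.X - 1) ^ s) :
    Even s := by
  have hm : 0 < m := by omega
  haveI : Nonempty (Fin m ⊕ Fin m) := ⟨Sum.inl ⟨0, hm⟩⟩
  set M := (Matrix.fromBlocks A B B A).map (Int.cast : ℤ → ℚ) with hM
  -- trace of M equals 2 * trace A (cast)
  have htr : M.trace = 2 * ((A.trace : ℤ) : ℚ) := by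
    simp [hM, Matrix.trace, Fintype.sum_sum_type, Matrix.fromBlocks,
      Matrix.diag, two_mul, Int.cast_sum]
  -- trace from charpoly
  have hcard : Fintype.card (Fin m ⊕ Fin m) = 2 * m := by simp [two_mul]
  have hdeg : M.charpoly.natDegree = 2 * m := by
    rw [Matrix.charpoly_natDegree_eq_dim, hcard]
  have htr2 : M.trace = -(M.charpoly.coeff (2 * m - 1)) := by
    rw [Matrix.trace_eq_neg_charpoly_coeff, hcard]
  have hnc : M.charpoly.nextCoeff = M.charpoly.coeff (2 * m - 1) := by
    rw [nextCoeff_of_natDegree_pos (by rw [hdeg]; omega), hdeg]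
  have hval : M.charpoly.nextCoeff = -((N : ℚ) + s) := by
    rw [hchar]; exact nextCoeff_rhs (N : ℚ) r s
  have key : 2 * ((A.trace : ℤ) : ℚ) = (N : ℚ) + s := by
    rw [← htr, htr2, ← hnc, hval, neg_neg]
  have keyZ : 2 * A.trace = N + (s : ℤ) := by
    exact_mod_cast key
  have : Even (s : ℤ) := by
    obtain ⟨k, hk⟩ := hN
    exact ⟨A.trace - k, by omega⟩
  exact Int.even_coe_nat s |>.mp this
end

section
/- Let θ be the tribonacci number (the real root > 1 of x³ - x² - x - 1) and let λ = 3θ⁴. Then λ is a Pisot number of algebraic degree 3, and the product of λ with its algebraic conjugates (the norm of λ) equals 27. -/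
open Polynomial

/-- The candidate minimal polynomial of `3θ⁴` over `ℤ`. -/
noncomputable def triPz : ℤ[X] := X ^ 3 - C 33 * X ^ 2 - C 45 * X - C 27

/-- The candidate minimal polynomial of `3θ⁴` over `ℚ`. -/
noncomputable def triPq : ℚ[X] := X ^ 3 - C 33 * X ^ 2 - C 45 * X - C 27

lemma triPz_monic : triPz.Monic := by unfold triPz; monicity!

lemma triPq_monic : triPq.Monic := by unfold triPq; monicity!

lemma triPq_natDegree : triPq.natDegree = 3 := by unfold triPq; compute_degree!

lemma triPz_coeff0 : triPz.coeff 0 = -27 := by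
  simp [triPz, coeff_X_pow, coeff_C]

lemma triPq_coeff0 : triPq.coeff 0 = -27 := by
  simp [triPq, coeff_X_pow, coeff_C]

lemma triPq_map : triPq = triPz.map (algebraMap ℤ ℚ) := by
  simp [triPq, triPz, Polynomial.map_sub, Polynomial.map_pow, Polynomial.map_mul, map_ofNat]

lemma triPq_noRationalRoot (r : ℚ) : ¬ triPq.IsRoot r := by
  intro hr
  have haeval : Polynomial.aeval r triPz = 0 := by
    rw [aeval_def, ← eval_map, ← triPq_map]
    exact hr
  obtain ⟨n, rfl, hdvd⟩ := exists_integer_of_is_root_of_monic triPz_monic haeval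
  rw [triPz_coeff0] at hdvd
  have hn27 : n ∣ 27 := dvd_neg.mp hdvd
  have heqQ : (n : ℚ) ^ 3 - 33 * (n : ℚ) ^ 2 - 45 * (n : ℚ) - 27 = 0 := by
    have := hr
    simp [triPq, IsRoot, eq_intCast] at this
    push_cast at this ⊢
    linarith
  have heq : n ^ 3 - 33 * n ^ 2 - 45 * n - 27 = 0 := by exact_mod_cast heqQ
  have h1 : n ≤ 27 := Int.le_of_dvd (by norm_num) hn27
  have h2 : -27 ≤ n := by
    have : -n ≤ 27 := Int.le_of_dvd (by norm_num) ((neg_dvd).mpr hn27)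
    linarith
  interval_cases n <;> norm_num at heq

lemma triPq_irreducible : Irreducible triPq := by
  rw [Polynomial.irreducible_iff_roots_eq_zero_of_degree_le_three
    (by rw [triPq_natDegree]; norm_num) (by rw [triPq_natDegree])]
  rw [Multiset.eq_zero_iff_forall_notMem]
  intro r hr
  exact triPq_noRationalRoot r ((mem_roots triPq_monic.ne_zero).mp hr)

set_option maxHeartbeats 1000000 in
/-- If `θ` is the tribonacci number and `λ = 3θ⁴`, then `λ` is a Pisot number of
algebraic degree 3, and the norm of `λ` (the product of `λ` with its conjugates,
which equals `(-1)^d` times the constant coefficient of its minimal polynomial)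
is `27`. -/
theorem three_theta_fourth_pisot
    (θ : ℝ) (hroot : θ ^ 3 = θ ^ 2 + θ + 1) (hθ : 1 < θ) :
    IsPisot (3 * θ ^ 4) ∧
    (minpoly ℚ (3 * θ ^ 4)).natDegree = 3 ∧
    (-1 : ℚ) ^ (minpoly ℚ (3 * θ ^ 4)).natDegree * (minpoly ℚ (3 * θ ^ 4)).coeff 0 = 27 := by
  set L : ℝ := 3 * θ ^ 4 with hLdef
  have hθ3 : θ ^ 3 - θ ^ 2 - θ - 1 = 0 := by linarith
  have hθlo : 1.83 < θ := by nlinarith [sq_nonneg (θ - 1.83), sq_nonneg (θ - 1), sq_nonneg θ]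
  have hθhi : θ < 1.84 := by nlinarith [sq_nonneg (θ - 1.84), sq_nonneg (θ - 1), sq_nonneg θ]
  have hLcube : L ^ 3 - 33 * L ^ 2 - 45 * L - 27 = 0 := by
    rw [hLdef]
    linear_combination (27 - 27*θ + 54*θ^3 + 54*θ^4 - 108*θ^5 + 108*θ^6 + 54*θ^7 + 27*θ^8
      + 27*θ^9) * hθ3
  have hL1 : (33.6 : ℝ) < L := by rw [hLdef]; nlinarith [sq_nonneg (θ - 1.83)]
  have hL2 : L < 34.4 := by rw [hLdef]; nlinarith [sq_nonneg (θ - 1.84)]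
  have hL0 : (0 : ℝ) < L := by linarith
  -- integrality
  have haevalZ : Polynomial.aeval L triPz = 0 := by
    simp only [triPz, map_sub, map_pow, map_mul, aeval_X, aeval_C, map_ofNat]
    push_cast
    linarith [hLcube]
  have hint : IsIntegral ℤ L := ⟨triPz, triPz_monic, by rw [← aeval_def]; exact haevalZ⟩
  -- the minimal polynomial over ℚ
  have haevalQ : Polynomial.aeval L triPq = 0 := by
    simp only [triPq, map_sub, map_pow, map_mul, aeval_X, aeval_C, map_ofNat]
    push_cast
    linarith [hLcube]
  have hmin : minpoly ℚ L = triPq :=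
    (minpoly.eq_of_irreducible_of_monic triPq_irreducible haevalQ triPq_monic).symm
  have hminZ : minpoly ℚ L = (minpoly ℤ L).map (algebraMap ℤ ℚ) :=
    minpoly.isIntegrallyClosed_eq_field_fractions' ℚ hint
  refine ⟨⟨hint, by linarith, ?_⟩, by rw [hmin, triPq_natDegree],
    by rw [hmin, triPq_natDegree, triPq_coeff0]; norm_num⟩
  intro z hz hne
  -- z is a root of triPq over ℂ
  have hzP : Polynomial.aeval z triPq = 0 := by
    rw [hmin] at hminZ
    rw [hminZ, aeval_map_algebraMap]
    exact hz
  have hzP' : z ^ 3 - 33 * z ^ 2 - 45 * z - 27 = 0 := by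
    simp only [triPq, map_sub, map_pow, map_mul, aeval_X, aeval_C, map_ofNat] at hzP
    push_cast at hzP
    linear_combination hzP
  -- factor out (z - L)
  set c : ℝ := 27 / L with hcdef
  have hLc : L * c = 27 := by rw [hcdef]; field_simp
  have hc2 : c - L ^ 2 + 33 * L = -45 := by
    have h : L * (c - L ^ 2 + 33 * L + 45) = 0 := by
      rw [mul_add, mul_add, mul_sub, hLc]; nlinarith [hLcube]
    have := mul_eq_zero.mp h
    rcases this with h' | h'
    · linarith
    · linarith
  have hcCast : (L : ℂ) * (c : ℂ) = 27 := by exact_mod_cast hLc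
  have hc2Cast : (c : ℂ) - (L : ℂ) ^ 2 + 33 * (L : ℂ) = -45 := by exact_mod_cast hc2
  have hfac : (z - (L : ℂ)) * (z ^ 2 + ((L : ℂ) - 33) * z + (c : ℂ)) = 0 := by
    linear_combination hzP' + z * hc2Cast - hcCast
  have hquad : z ^ 2 + ((L : ℂ) - 33) * z + (c : ℂ) = 0 := by
    rcases mul_eq_zero.mp hfac with h | h
    · exact absurd (sub_eq_zero.mp h) hne
    · exact h
  -- bounds on c
  have hcpos : (0.7 : ℝ) < c := by rw [hcdef]; rw [lt_div_iff₀ hL0]; nlinarith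
  have hclt : c < 1 := by rw [hcdef]; rw [div_lt_one hL0]; linarith
  -- real and imaginary parts
  set x : ℝ := z.re with hxdef
  set y : ℝ := z.im with hydef
  have h1 : (z ^ 2 + ((L : ℂ) - 33) * z + (c : ℂ)).re = 0 := by rw [hquad]; rfl
  have h2 : (z ^ 2 + ((L : ℂ) - 33) * z + (c : ℂ)).im = 0 := by rw [hquad]; rfl
  simp only [pow_two, Complex.add_re, Complex.add_im, Complex.mul_re, Complex.mul_im,
    Complex.sub_re, Complex.sub_im, Complex.ofReal_re, Complex.ofReal_im, Complex.re_ofNat,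
    Complex.im_ofNat] at h1 h2
  rw [← hxdef, ← hydef] at h1 h2
  have habs : ‖z‖ ^ 2 = x ^ 2 + y ^ 2 := by
    rw [Complex.sq_norm, Complex.normSq_apply, ← hxdef, ← hydef]; ring
  have hzabs : ‖z‖ ^ 2 < 1 := by
    rcases eq_or_ne y 0 with hy | hy
    · -- real root of the quadratic: impossible (negative discriminant)
      exfalso
      rw [hy] at h1
      nlinarith [sq_nonneg (2 * x + (L - 33)), hL1, hL2]
    · -- complex root: |z|² = c
      have hx : 2 * x + (L - 33) = 0 := by
        rcases mul_eq_zero.mp (show y * (2 * x + (L - 33)) = 0 by linear_combination h2) with h | h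
        · exact absurd h hy
        · exact h
      have hxy : x ^ 2 + y ^ 2 = c := by linear_combination (-1 : ℝ) * h1 + x * hx
      rw [habs, hxy]
      exact hclt
  nlinarith [norm_nonneg z, hzabs]
end

section
/- Let λ > 1 be a real algebraic number of degree d with minimal polynomial x^d + a_{d-1}x^{d-1} + ⋯ + a_0, all of whose conjugates other than λ have absolute value < 1 (λ Pisot). Write λ^k = ∑_{i=0}^{d-1} c_{k,i} λ^i with c_{k,i} ∈ ℚ. Then the vectors (c_{k,0}, …, c_{k,d-1})^T / λ^k converge as k → ∞ to the vector r with r_j = (λ^{d-1-j} + a_{d-1}λ^{d-2-j} + ⋯ + a_{j+1})/p'(λ), which is a right eigenvector of the companion matrix of p with eigenvalue λ normalized so that ∑_j λ^j r_j = 1. -/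
/-- For a Pisot number `λ` of degree `d` with minimal polynomial `p` and expansions
`λ^k = ∑_i c_{k,i} λ^i`, the vectors `(c_{k,i})/λ^k` converge to the vector `r` with
`r_j = (λ^{d-1-j} + a_{d-1}λ^{d-2-j} + ⋯ + a_{j+1})/p'(λ)`, which is a right
eigenvector of the companion matrix of `p` with eigenvalue `λ`, normalized so that
`∑_j λ^j r_j = 1`. -/
theorem coeff_vectors_tendsto_eigenvector
    (lam : ℝ) (hp : IsPisot lam) (d : ℕ) (hd : d = (minpoly ℤ lam).natDegree)
    (a : ℕ → ℤ) (ha : ∀ i, a i = (minpoly ℤ lam).coeff i)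
    (c : ℕ → Fin d → ℚ)
    (hc : ∀ k : ℕ, lam ^ k = ∑ i : Fin d, (c k i : ℝ) * lam ^ (i : ℕ))
    (r : Fin d → ℝ)
    (hr : ∀ j : Fin d, r j =
      (∑ m ∈ Finset.range (d - (j : ℕ)), (a ((j : ℕ) + 1 + m) : ℝ) * lam ^ m) /
        Polynomial.aeval lam (Polynomial.derivative (minpoly ℤ lam)))
    (C : Matrix (Fin d) (Fin d) ℝ)
    (hC : ∀ i j : Fin d, C i j =
      if (j : ℕ) = d - 1 then -(a (i : ℕ) : ℝ)
      else if (i : ℕ) = (j : ℕ) + 1 then 1 else 0) :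
    Filter.Tendsto (fun k : ℕ => fun i : Fin d => (c k i : ℝ) / lam ^ k)
      Filter.atTop (nhds r) ∧
    C.mulVec r = lam • r ∧
    ∑ j : Fin d, lam ^ (j : ℕ) * r j = 1 := by
  classical
  obtain ⟨hint, hlam1, hconj⟩ := hp
  have hlam0 : (0:ℝ) < lam := lt_trans one_pos hlam1
  set p : Polynomial ℤ := minpoly ℤ lam with hpdef
  have hmonic : p.Monic := minpoly.monic hint
  have hdeg : p.natDegree = d := hd.symm
  have hdpos : 0 < d := by rw [hd]; exact minpoly.natDegree_pos hint
  have hatop : ∀ n, d < n → (a n : ℝ) = 0 := by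
    intro n hn
    rw [ha]
    norm_cast
    exact Polynomial.coeff_eq_zero_of_natDegree_lt (by omega)
  have had : (a d : ℝ) = 1 := by
    have h1 : p.coeff d = 1 := by rw [← hdeg]; exact hmonic.coeff_natDegree
    rw [ha, h1]; norm_num
  have hsum0 : ∑ n ∈ Finset.range (d+1), (a n : ℝ) * lam ^ n = 0 := by
    have h := minpoly.aeval ℤ lam
    rw [Polynomial.aeval_eq_sum_range] at h
    simp only [zsmul_eq_mul] at h
    rw [← hpdef, hdeg] at h
    simpa only [ha] using h
  -- the auxiliary sums
  set s : ℕ → ℝ := fun j => ∑ m ∈ Finset.range (d - j), (a (j+1+m) : ℝ) * lam ^ m with hs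
  have hstop : ∀ n, d ≤ n → s n = 0 := by
    intro n hn
    simp [hs, Nat.sub_eq_zero_of_le hn]
  have hstep : ∀ n, s n = (a (n+1) : ℝ) + lam * s (n+1) := by
    intro n
    rcases lt_or_ge n d with hn | hn
    · have h1 : d - n = (d - (n+1)) + 1 := by omega
      simp only [hs]
      rw [h1, Finset.sum_range_succ']
      rw [add_comm]
      congr 1
      · simp
      · rw [Finset.mul_sum]
        refine Finset.sum_congr rfl fun m _ => ?_
        have h2 : n+1+(m+1) = (n+1)+1+m := by omega
        rw [h2, pow_succ]
        ring
    · rw [hstop n hn, hstop (n+1) (by omega), hatop (n+1) (by omega)]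
      ring
  have h0 : lam * s 0 = -((a 0 : ℝ)) := by
    rw [Finset.sum_range_succ'] at hsum0
    simp only [pow_zero, mul_one] at hsum0
    have h2 : lam * s 0 = ∑ m ∈ Finset.range d, (a (m+1):ℝ) * lam ^ (m+1) := by
      simp only [hs, Nat.sub_zero, Finset.mul_sum]
      refine Finset.sum_congr rfl fun m _ => ?_
      have h3 : 0+1+m = m+1 := by omega
      rw [h3, pow_succ]
      ring
    rw [h2]
    linarith
  -- the polynomial Q with coefficients s j
  set Q : Polynomial ℝ := ∑ j ∈ Finset.range d, Polynomial.monomial j (s j) with hQ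
  have hQcoeff : ∀ j, Q.coeff j = if j < d then s j else 0 := by
    intro j
    rw [hQ, Polynomial.finset_sum_coeff]
    simp only [Polynomial.coeff_monomial]
    rw [Finset.sum_ite_eq' (Finset.range d) j s]
    simp [Finset.mem_range]
  have hkey : (Polynomial.X - Polynomial.C lam) * Q = p.map (Int.castRingHom ℝ) := by
    ext n
    rw [Polynomial.coeff_map]
    have hrhs : (Int.castRingHom ℝ) (p.coeff n) = ((a n : ℤ) : ℝ) := by rw [ha]; rfl
    rw [hrhs, sub_mul, Polynomial.coeff_sub, Polynomial.coeff_C_mul]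
    cases n with
    | zero =>
      rw [Polynomial.mul_coeff_zero, Polynomial.coeff_X_zero, zero_mul, hQcoeff 0,
        if_pos hdpos, zero_sub, h0, neg_neg]
    | succ m =>
      rw [Polynomial.coeff_X_mul, hQcoeff, hQcoeff]
      by_cases h1 : m + 1 < d
      · rw [if_pos (by omega), if_pos h1]
        have := hstep m
        linarith
      · by_cases h2 : m + 1 = d
        · rw [if_pos (by omega), if_neg (by omega)]
          have h3 := hstep m
          rw [hstop (m+1) (by omega)] at h3
          rw [h3]; ring
        · rw [if_neg (by omega), if_neg (by omega)]
          rw [hatop (m+1) (by omega)]; ring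
  set D : ℝ := Q.eval lam with hDdef
  have hDaev : (Polynomial.aeval lam (Polynomial.derivative p)) = D := by
    have h := congrArg Polynomial.derivative hkey
    rw [Polynomial.derivative_mul, Polynomial.derivative_sub, Polynomial.derivative_X,
      Polynomial.derivative_C, sub_zero, one_mul, Polynomial.derivative_map] at h
    have h2 := congrArg (Polynomial.eval lam) h
    rw [Polynomial.eval_add, Polynomial.eval_mul, Polynomial.eval_sub, Polynomial.eval_X,
      Polynomial.eval_C, sub_self, zero_mul, add_zero] at h2
    rw [Polynomial.aeval_def, Polynomial.eval₂_eq_eval_map, algebraMap_int_eq]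
    exact h2.symm
  have hQeval : D = ∑ j ∈ Finset.range d, s j * lam ^ j := by
    rw [hDdef, hQ, Polynomial.eval_finset_sum]
    simp [Polynomial.eval_monomial]
  -- complex side
  set f : ℝ →+* ℂ := algebraMap ℝ ℂ with hf
  set P : Polynomial ℂ := p.map (Int.castRingHom ℂ) with hP
  have hkeyC : (Polynomial.X - Polynomial.C (lam:ℂ)) * Q.map f = P := by
    have h := congrArg (Polynomial.map f) hkey
    rw [Polynomial.map_mul, Polynomial.map_sub, Polynomial.map_X, Polynomial.map_C,
      Polynomial.map_map] at h
    have hcomp : (f.comp (Int.castRingHom ℝ)) = Int.castRingHom ℂ := by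
      exact RingHom.ext_int _ _
    rw [hcomp] at h
    have hfl : f lam = (lam:ℂ) := rfl
    rw [hfl] at h
    exact h
  have hPmonic : P.Monic := hmonic.map _
  have hPne : P ≠ 0 := hPmonic.ne_zero
  have hPdeg : P.natDegree = d := by
    rw [hP, hmonic.natDegree_map, hdeg]
  have hintQ : IsIntegral ℚ lam := hint.tower_top
  have hminQ : minpoly ℚ lam = p.map (Int.castRingHom ℚ) := by
    have h := minpoly.isIntegrallyClosed_eq_field_fractions' ℚ hint
    rwa [algebraMap_int_eq] at h
  have hPC : P = (minpoly ℚ lam).map (algebraMap ℚ ℂ) := by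
    rw [hminQ, Polynomial.map_map, hP, RingHom.ext_int ((algebraMap ℚ ℂ).comp (Int.castRingHom ℚ)) (Int.castRingHom ℂ)]
  have hPsep : P.Separable := by
    have h1 : (minpoly ℚ lam).Separable := (minpoly.irreducible hintQ).separable
    rw [hPC]
    exact h1.map
  have hndup : P.roots.Nodup := Polynomial.nodup_roots hPsep
  have hPlamroot : P.eval (lam:ℂ) = 0 := by
    rw [← hkeyC]
    simp
  set T : Finset ℂ := P.roots.toFinset with hT
  have hTval : T.val = P.roots := by
    rw [hT, Multiset.toFinset_val, Multiset.Nodup.dedup hndup]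
  have hlamT : (lam:ℂ) ∈ T := by
    rw [hT, Multiset.mem_toFinset, Polynomial.mem_roots hPne]
    exact hPlamroot
  have hprod : ∏ μ ∈ T, (Polynomial.X - Polynomial.C μ) = P := by
    have h := (IsAlgClosed.splits P).eq_prod_roots_of_monic hPmonic
    rw [Finset.prod_eq_multiset_prod, hTval]
    exact h.symm
  have hQprod : Q.map f = ∏ μ ∈ T.erase (lam:ℂ), (Polynomial.X - Polynomial.C μ) := by
    have h1 : (Polynomial.X - Polynomial.C (lam:ℂ)) * ∏ μ ∈ T.erase (lam:ℂ), (Polynomial.X - Polynomial.C μ)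
        = (Polynomial.X - Polynomial.C (lam:ℂ)) * Q.map f := by
      rw [hkeyC, ← hprod]
      exact Finset.mul_prod_erase T (fun μ => Polynomial.X - Polynomial.C μ) hlamT
    exact (mul_left_cancel₀ (Polynomial.X_sub_C_ne_zero (lam:ℂ)) h1).symm
  have hDC : ((D:ℝ):ℂ) = ∏ μ ∈ T.erase (lam:ℂ), ((lam:ℂ) - μ) := by
    have h := congrArg (Polynomial.eval (lam:ℂ)) hQprod
    simp only [Polynomial.eval_prod, Polynomial.eval_sub, Polynomial.eval_X,
      Polynomial.eval_C] at h
    rw [← h, Polynomial.eval_map]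
    exact (Polynomial.eval₂_at_apply f lam).symm
  have hDne : D ≠ 0 := by
    have h : ((D:ℝ):ℂ) ≠ 0 := by
      rw [hDC]
      refine Finset.prod_ne_zero_iff.mpr fun μ hμ => ?_
      exact sub_ne_zero.mpr (Finset.ne_of_mem_erase hμ).symm
    simpa using h
  have hrs : ∀ j : Fin d, r j = s (j:ℕ) * D⁻¹ := by
    intro j
    rw [hr j, hDaev, div_eq_mul_inv]
  -- part 3
  have hlast : s (d-1) = 1 := by
    have h1 := hstep (d-1)
    have h2 : d-1+1 = d := by omega
    rw [h2, hstop d le_rfl, had] at h1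
    rw [h1]; ring
  have part3 : ∑ j : Fin d, lam ^ (j : ℕ) * r j = 1 := by
    have h1 : ∑ j : Fin d, lam ^ (j:ℕ) * r j = (∑ j ∈ Finset.range d, s j * lam ^ j) * D⁻¹ := by
      rw [Finset.sum_mul, ← Fin.sum_univ_eq_sum_range (fun j => s j * lam ^ j * D⁻¹) d]
      refine Finset.sum_congr rfl fun j _ => ?_
      rw [hrs j]; ring
    rw [h1, ← hQeval, mul_inv_cancel₀ hDne]
  -- part 2
  have hkeymul : ∀ i : Fin d, (∑ j : Fin d,
      (if (j:ℕ) = d - 1 then -(a (i:ℕ):ℝ) else if (i:ℕ) = (j:ℕ)+1 then 1 else 0) * s (j:ℕ))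
      = lam * s (i:ℕ) := by
    intro i
    have hd1 : d - 1 < d := by omega
    set jl : Fin d := ⟨d-1, hd1⟩ with hjl
    rcases Nat.eq_zero_or_pos (i:ℕ) with hi0 | hip
    · have hsplit : ∀ j : Fin d,
          (if (j:ℕ) = d - 1 then -(a (i:ℕ):ℝ) else if (i:ℕ) = (j:ℕ)+1 then 1 else 0) * s (j:ℕ)
          = if j = jl then -(a (i:ℕ):ℝ) * s (j:ℕ) else 0 := by
        intro j
        by_cases hj : j = jl
        · subst hj
          rw [if_pos rfl, if_pos rfl]
        · have hne : (j:ℕ) ≠ d-1 := by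
            intro h
            exact hj (Fin.ext (by rw [h]))
          rw [if_neg hne, if_neg (by omega), zero_mul, if_neg hj]
      rw [Finset.sum_congr rfl (fun j _ => hsplit j), Finset.sum_ite_eq' Finset.univ jl]
      rw [if_pos (Finset.mem_univ jl)]
      have : ((jl : Fin d) : ℕ) = d - 1 := rfl
      rw [this, hlast, mul_one, hi0, ← h0]
    · have hid : (i:ℕ) - 1 < d := by have := i.isLt; omega
      set jp : Fin d := ⟨(i:ℕ)-1, hid⟩ with hjp
      have hjpl : jp ≠ jl := by
        intro h
        have h2 : (i:ℕ) - 1 = d - 1 := congrArg Fin.val h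
        have := i.isLt
        omega
      have hsplit : ∀ j : Fin d,
          (if (j:ℕ) = d - 1 then -(a (i:ℕ):ℝ) else if (i:ℕ) = (j:ℕ)+1 then 1 else 0) * s (j:ℕ)
          = (if j = jl then -(a (i:ℕ):ℝ) * s (j:ℕ) else 0) + (if j = jp then s (j:ℕ) else 0) := by
        intro j
        by_cases h1 : j = jl
        · subst h1
          rw [if_pos rfl, if_pos rfl, if_neg (fun h => hjpl h.symm), add_zero]
        · have hne : (j:ℕ) ≠ d-1 := by
            intro h
            exact h1 (Fin.ext (by rw [h]))
          rw [if_neg hne, if_neg h1, zero_add]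
          by_cases h2 : j = jp
          · subst h2
            have hv : (i:ℕ) = ((jp : Fin d):ℕ)+1 := by
              have : ((jp : Fin d):ℕ) = (i:ℕ) - 1 := rfl
              omega
            rw [if_pos hv, one_mul, if_pos rfl]
          · have hne2 : (i:ℕ) ≠ (j:ℕ)+1 := by
              intro h
              refine h2 (Fin.ext ?_)
              have : ((jp : Fin d):ℕ) = (i:ℕ) - 1 := rfl
              omega
            rw [if_neg hne2, zero_mul, if_neg h2]
      rw [Finset.sum_congr rfl (fun j _ => hsplit j), Finset.sum_add_distrib,
        Finset.sum_ite_eq' Finset.univ jl, Finset.sum_ite_eq' Finset.univ jp,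
        if_pos (Finset.mem_univ jl), if_pos (Finset.mem_univ jp)]
      have he1 : ((jl : Fin d) : ℕ) = d - 1 := rfl
      have he2 : ((jp : Fin d) : ℕ) = (i:ℕ) - 1 := rfl
      rw [he1, he2, hlast, mul_one]
      have h3 := hstep ((i:ℕ)-1)
      have h4 : (i:ℕ)-1+1 = (i:ℕ) := by omega
      rw [h4] at h3
      rw [h3]; ring
  have part2 : C.mulVec r = lam • r := by
    funext i
    have h1 : C.mulVec r i = ∑ j, C i j * r j := rfl
    rw [h1, Pi.smul_apply, smul_eq_mul]
    have h2 : ∑ j, C i j * r j = (∑ j : Fin d,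
        (if (j:ℕ) = d - 1 then -(a (i:ℕ):ℝ) else if (i:ℕ) = (j:ℕ)+1 then 1 else 0) * s (j:ℕ)) * D⁻¹ := by
      rw [Finset.sum_mul]
      refine Finset.sum_congr rfl fun j _ => ?_
      rw [hC i j, hrs j]; ring
    rw [h2, hkeymul i, hrs i]; ring
  -- part 1
  have hceval : ∀ (k : ℕ) (μ : ℂ), μ ∈ P.roots → (μ:ℂ)^k = ∑ i : Fin d, ((c k i : ℚ):ℂ) * μ^(i:ℕ) := by
    intro k μ hμ
    have hroot : P.eval μ = 0 := Polynomial.isRoot_of_mem_roots hμ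
    set g : Polynomial ℚ := Polynomial.X^k - ∑ i : Fin d, Polynomial.C (c k i) * Polynomial.X^(i:ℕ) with hg
    have hgl : Polynomial.aeval lam g = 0 := by
      rw [hg, map_sub, map_pow, Polynomial.aeval_X, map_sum]
      rw [sub_eq_zero, hc k]
      refine Finset.sum_congr rfl fun i _ => ?_
      rw [map_mul, Polynomial.aeval_C, map_pow, Polynomial.aeval_X, eq_ratCast]
    have hdvd : minpoly ℚ lam ∣ g := minpoly.dvd ℚ lam hgl
    obtain ⟨h, hh⟩ := hdvd
    have hmap := congrArg (fun q : Polynomial ℚ => Polynomial.eval μ (q.map (algebraMap ℚ ℂ))) hh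
    simp only [Polynomial.map_mul, Polynomial.eval_mul, ← hPC, hroot, zero_mul] at hmap
    rw [hg] at hmap
    simp only [Polynomial.map_sub, Polynomial.map_pow, Polynomial.map_X, Polynomial.map_sum,
      Polynomial.map_mul, Polynomial.map_C, Polynomial.eval_sub, Polynomial.eval_pow,
      Polynomial.eval_X, Polynomial.eval_finset_sum, Polynomial.eval_mul, Polynomial.eval_C,
      eq_ratCast] at hmap
    rw [sub_eq_zero] at hmap
    exact hmap
  have hckey : ∀ (k : ℕ) (i : Fin d), ((c k i : ℚ):ℂ)
      = ∑ μ ∈ T, μ^k * (Lagrange.basis T id μ).coeff (i:ℕ) := by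
    intro k i
    have hTcard : T.card = d := by
      have h1 : Multiset.card P.roots = P.natDegree :=
        (Polynomial.splits_iff_card_roots.mp (IsAlgClosed.splits P))
      rw [Finset.card, hTval, h1, hPdeg]
    set Rk : Polynomial ℂ := ∑ j : Fin d, Polynomial.C ((c k j : ℚ):ℂ) * Polynomial.X^(j:ℕ) with hRk
    have hdegR : Rk.degree < (T.card : ℕ) := by
      rw [hTcard, hRk]
      refine lt_of_le_of_lt (Polynomial.degree_sum_le _ _) ?_
      rw [Finset.sup_lt_iff (by exact_mod_cast WithBot.bot_lt_coe d)]
      intro j _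
      refine lt_of_le_of_lt (Polynomial.degree_C_mul_X_pow_le _ _) ?_
      exact_mod_cast j.isLt
    have heval : ∀ μ ∈ T, Rk.eval (id μ) = μ^k := by
      intro μ hμ
      rw [hRk, id_eq, Polynomial.eval_finset_sum]
      simp only [Polynomial.eval_mul, Polynomial.eval_C, Polynomial.eval_pow, Polynomial.eval_X]
      exact (hceval k μ (Multiset.mem_toFinset.mp hμ)).symm
    have hI := Lagrange.eq_interpolate_of_eval_eq (fun μ : ℂ => μ^k)
      (Function.injective_id.injOn) hdegR heval
    have hco := congrArg (fun q : Polynomial ℂ => q.coeff (i:ℕ)) hI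
    simp only [Lagrange.interpolate_apply, Polynomial.finset_sum_coeff,
      Polynomial.coeff_C_mul] at hco
    have hL : Rk.coeff (i:ℕ) = ((c k i : ℚ):ℂ) := by
      rw [hRk, Polynomial.finset_sum_coeff]
      rw [Finset.sum_eq_single i]
      · simp
      · intro j _ hji
        rw [Polynomial.coeff_C_mul, Polynomial.coeff_X_pow,
          if_neg (fun h => hji (Fin.ext h.symm)), mul_zero]
      · intro h; exact absurd (Finset.mem_univ i) h
    rw [← hL]
    exact hco
  have hbl : ∀ i : Fin d, (Lagrange.basis T id (lam:ℂ)).coeff (i:ℕ) = ((r i : ℝ) : ℂ) := by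
    intro i
    have hbasis : Lagrange.basis T id (lam:ℂ) = Polynomial.C (((D:ℝ):ℂ))⁻¹ * Q.map f := by
      simp only [Lagrange.basis, Lagrange.basisDivisor, id_eq]
      rw [Finset.prod_mul_distrib, ← map_prod, Finset.prod_inv_distrib, ← hDC, hQprod]
    rw [hbasis, Polynomial.coeff_C_mul, Polynomial.coeff_map, hQcoeff, if_pos i.isLt]
    have hfv : f (s (i:ℕ)) = ((s (i:ℕ) : ℝ):ℂ) := rfl
    rw [hfv, hrs i]
    push_cast
    ring
  have hsmall : ∀ μ ∈ T.erase (lam:ℂ), ‖μ / (lam:ℂ)‖ < 1 := by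
    intro μ hμ
    have hμT := Finset.mem_of_mem_erase hμ
    have hμne : μ ≠ (lam:ℂ) := Finset.ne_of_mem_erase hμ
    have hroot : Polynomial.aeval μ p = 0 := by
      rw [Polynomial.aeval_def, Polynomial.eval₂_eq_eval_map, algebraMap_int_eq]
      exact Polynomial.isRoot_of_mem_roots (Multiset.mem_toFinset.mp hμT)
    have habs : ‖μ‖ < 1 := hconj μ hroot hμne
    rw [norm_div, Complex.norm_real, Real.norm_eq_abs, abs_of_pos hlam0, div_lt_one hlam0]
    calc ‖μ‖ < 1 := habs
      _ < lam := hlam1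
  have hconv : ∀ i : Fin d, Filter.Tendsto (fun k => (c k i : ℝ)/lam^k) Filter.atTop (nhds (r i)) := by
    intro i
    have hlkne : ∀ k : ℕ, ((lam:ℂ))^k ≠ 0 := fun k =>
      pow_ne_zero _ (by exact_mod_cast hlam0.ne')
    have heq : ∀ k : ℕ, (((c k i : ℝ)/lam^k : ℝ):ℂ) = ((r i : ℝ):ℂ) +
        ∑ μ ∈ T.erase (lam:ℂ), (μ/(lam:ℂ))^k * (Lagrange.basis T id μ).coeff (i:ℕ) := by
      intro k
      have h1 := hckey k i
      rw [← Finset.add_sum_erase T _ hlamT] at h1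
      have h2 : (((c k i : ℝ)/lam^k : ℝ):ℂ) = ((c k i : ℚ):ℂ) / ((lam:ℂ))^k := by
        push_cast
        ring
      rw [h2, h1, ← hbl i, add_div,
        mul_div_cancel_left₀ _ (hlkne k), Finset.sum_div]
      congr 1
      refine Finset.sum_congr rfl fun μ _ => ?_
      rw [div_pow]
      ring
    have hzero : Filter.Tendsto (fun k : ℕ => ∑ μ ∈ T.erase (lam:ℂ),
        (μ/(lam:ℂ))^k * (Lagrange.basis T id μ).coeff (i:ℕ)) Filter.atTop (nhds 0) := by
      have h : Filter.Tendsto (fun k : ℕ => ∑ μ ∈ T.erase (lam:ℂ),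
          (μ/(lam:ℂ))^k * (Lagrange.basis T id μ).coeff (i:ℕ)) Filter.atTop
          (nhds (∑ _μ ∈ T.erase (lam:ℂ), (0:ℂ))) := by
        refine tendsto_finset_sum _ fun μ hμ => ?_
        have h2 := (tendsto_pow_atTop_nhds_zero_of_norm_lt_one (hsmall μ hμ)).mul_const
          ((Lagrange.basis T id μ).coeff (i:ℕ))
        simpa using h2
      simpa using h
    have hCtend : Filter.Tendsto (fun k : ℕ => (((c k i : ℝ)/lam^k : ℝ):ℂ))
        Filter.atTop (nhds ((r i : ℝ):ℂ)) := by
      rw [show (fun k : ℕ => (((c k i : ℝ)/lam^k : ℝ):ℂ)) = fun k => ((r i : ℝ):ℂ) +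
        ∑ μ ∈ T.erase (lam:ℂ), (μ/(lam:ℂ))^k * (Lagrange.basis T id μ).coeff (i:ℕ)
        from funext heq]
      simpa using tendsto_const_nhds.add hzero
    have h2 : Filter.Tendsto (fun k : ℕ => ((((c k i : ℝ)/lam^k : ℝ):ℂ)).re)
        Filter.atTop (nhds ((((r i : ℝ)):ℂ)).re) :=
      (Complex.continuous_re.tendsto _).comp hCtend
    simp only [Complex.ofReal_re] at h2
    exact h2
  refine ⟨?_, part2, part3⟩
  rw [tendsto_pi_nhds]
  exact hconv
end

section
/- Let λ be a Pisot number of degree d with minimal polynomial p having constant coefficient a_0, and let α_0, …, α_{d-1} ∈ ℚ. Suppose there exist a real number L > 0 and an integer K such that for all k ≥ K and all 0 ≤ i < d, evaluating the linear functional ∑ α_i c_i on the coefficient expansion of λ^{k+i}L (with respect to the ℚ-basis L, Lλ, …, Lλ^{d-1} of L·ℚ(λ)) yields an integer. Then each α_i lies in ℤ[1/a_0], i.e., each α_i is an integer divided by a power of a_0. -/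
open Polynomial

/-- Closure of `{z / a^e}` under addition. -/
lemma S_add {a : ℤ} (ha : (a:ℚ) ≠ 0) {q r : ℚ}
    (hq : ∃ (z : ℤ) (e : ℕ), q = (z:ℚ) / (a:ℚ) ^ e)
    (hr : ∃ (z : ℤ) (e : ℕ), r = (z:ℚ) / (a:ℚ) ^ e) :
    ∃ (z : ℤ) (e : ℕ), q + r = (z:ℚ) / (a:ℚ) ^ e := by
  obtain ⟨z1, e1, rfl⟩ := hq
  obtain ⟨z2, e2, rfl⟩ := hr
  refine ⟨z1 * a ^ e2 + z2 * a ^ e1, e1 + e2, ?_⟩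
  rw [div_add_div _ _ (pow_ne_zero e1 ha) (pow_ne_zero e2 ha), ← pow_add]
  push_cast
  ring_nf

lemma S_intmul {a : ℤ} {w : ℤ} {q : ℚ}
    (hq : ∃ (z : ℤ) (e : ℕ), q = (z:ℚ) / (a:ℚ) ^ e) :
    ∃ (z : ℤ) (e : ℕ), (w:ℚ) * q = (z:ℚ) / (a:ℚ) ^ e := by
  obtain ⟨z, e, rfl⟩ := hq
  exact ⟨w * z, e, by push_cast; ring⟩

lemma S_sum {a : ℤ} (ha : (a:ℚ) ≠ 0) {n : ℕ} (f : Fin n → ℚ)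
    (hf : ∀ m, ∃ (z : ℤ) (e : ℕ), f m = (z:ℚ) / (a:ℚ) ^ e) :
    ∃ (z : ℤ) (e : ℕ), ∑ m, f m = (z:ℚ) / (a:ℚ) ^ e := by
  induction n with
  | zero => exact ⟨0, 0, by simp⟩
  | succ n ih =>
    rw [Fin.sum_univ_succ]
    exact S_add ha (hf 0) (ih _ fun m => hf m.succ)


/-- Let `λ` be a Pisot number of degree `d` with constant coefficient `a_0`, and
`α_0, …, α_{d-1} ∈ ℚ`. If for some `L > 0` and all `k ≥ K`, `0 ≤ i < d`, the linear
functional `∑ α_i c_i` yields an integer on the coefficient expansion of `λ^{k+i} L`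
(w.r.t. the basis `L, Lλ, …, Lλ^{d-1}`), then each `α_i` lies in `ℤ[1/a_0]`. -/
theorem alpha_mem_int_inv_a0
    (lam : ℝ) (hp : IsPisot lam) (d : ℕ) (hd : d = (minpoly ℤ lam).natDegree)
    (a0 : ℤ) (ha0 : a0 = (minpoly ℤ lam).coeff 0)
    (α : Fin d → ℚ) (L : ℝ) (hL : 0 < L) (K : ℕ)
    (c : ℕ → Fin d → ℚ)
    (hc : ∀ k : ℕ, lam ^ k * L = ∑ i : Fin d, (c k i : ℝ) * lam ^ (i : ℕ) * L)
    (hint : ∀ k : ℕ, K ≤ k → ∀ i : Fin d,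
      ∃ z : ℤ, ∑ j : Fin d, α j * c (k + (i : ℕ)) j = (z : ℚ)) :
    ∀ i : Fin d, ∃ (z : ℤ) (e : ℕ), α i = (z : ℚ) / (a0 : ℚ) ^ e := by
  obtain ⟨hint', hgt1, -⟩ := hp
  have hlam0 : lam ≠ 0 := by positivity
  have hQint : IsIntegral ℚ lam := hint'.tower_top
  have hminQ : minpoly ℚ lam = (minpoly ℤ lam).map (algebraMap ℤ ℚ) :=
    minpoly.isIntegrallyClosed_eq_field_fractions' ℚ hint'
  have hdQ : d = (minpoly ℚ lam).natDegree := by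
    rw [hminQ, Polynomial.natDegree_map_eq_of_injective
      (algebraMap ℤ ℚ).injective_int]
    exact hd
  have ha0ne : (a0 : ℚ) ≠ 0 := by
    have h1 : (minpoly ℚ lam).coeff 0 ≠ 0 := minpoly.coeff_zero_ne_zero hQint hlam0
    rw [hminQ, Polynomial.coeff_map] at h1
    rwa [ha0]
  -- linear independence of powers
  have huniq : ∀ q : Fin d → ℚ, (∑ j : Fin d, (q j : ℝ) * lam ^ (j : ℕ)) = 0 →
      ∀ j, q j = 0 := by
    have li : LinearIndependent ℚ fun i : Fin d => lam ^ (i : ℕ) := by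
      rw [hdQ]; exact linearIndependent_pow lam
    intro q hq
    refine Fintype.linearIndependent_iff.mp li q ?_
    simpa [Rat.smul_def] using hq
  have hLne : L ≠ 0 := ne_of_gt hL
  have hcoef : ∀ q r : Fin d → ℚ,
      (∑ j : Fin d, (q j : ℝ) * lam ^ (j : ℕ) * L)
        = (∑ j : Fin d, (r j : ℝ) * lam ^ (j : ℕ) * L) → ∀ j, q j = r j := by
    intro q r h j
    have h2 : (∑ j : Fin d, ((q j - r j : ℚ) : ℝ) * lam ^ (j : ℕ)) * L = 0 := by
      rw [Finset.sum_mul]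
      push_cast
      rw [← sub_eq_zero] at h
      rw [← h]
      ring_nf
      rw [Finset.sum_sub_distrib]
      congr 1 <;> exact Finset.sum_congr rfl fun x _ => by ring
    have h3 := (mul_eq_zero.mp h2).resolve_right hLne
    have := huniq _ h3 j
    linarith [this]
  set p := minpoly ℤ lam with hpdef
  have hmonic : p.Monic := minpoly.monic hint'
  have hpow : lam ^ d = -∑ m : Fin d, ((p.coeff (m : ℕ) : ℝ)) * lam ^ (m : ℕ) := by
    have h0 : (aeval lam p : ℝ) = 0 := minpoly.aeval ℤ lam
    rw [aeval_eq_sum_range, ← hd, Finset.sum_range_succ] at h0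
    have hcd : p.coeff d = 1 := by rw [hd]; exact hmonic.coeff_natDegree
    rw [hcd, ← Fin.sum_univ_eq_sum_range (fun i => (p.coeff i) • lam ^ i) d] at h0
    simp only [zsmul_eq_mul, one_smul] at h0
    linarith [h0]
  have hcrec : ∀ k : ℕ, ∀ j : Fin d,
      c (k + d) j = -∑ m : Fin d, (p.coeff (m : ℕ) : ℚ) * c (k + (m : ℕ)) j := by
    intro k j
    refine hcoef (c (k + d))
      (fun j => -∑ m : Fin d, (p.coeff (m : ℕ) : ℚ) * c (k + (m : ℕ)) j)
      ((hc (k + d)).symm.trans ?_) j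
    calc lam ^ (k + d) * L
        = (-∑ m : Fin d, (p.coeff (m : ℕ) : ℝ) * lam ^ (m : ℕ)) * (lam ^ k * L) := by
          rw [← hpow]; ring
      _ = ∑ m : Fin d, -((p.coeff (m : ℕ) : ℝ) * (lam ^ (k + (m : ℕ)) * L)) := by
          rw [neg_mul, Finset.sum_mul, ← Finset.sum_neg_distrib]
          refine Finset.sum_congr rfl fun m _ => ?_
          ring
      _ = ∑ m : Fin d, -((p.coeff (m : ℕ) : ℝ) *
            (∑ j : Fin d, (c (k + (m : ℕ)) j : ℝ) * lam ^ (j : ℕ) * L)) := by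
          refine Finset.sum_congr rfl fun m _ => ?_
          rw [← hc (k + (m : ℕ))]
      _ = ∑ j : Fin d, ((-∑ m : Fin d, (p.coeff (m : ℕ) : ℚ) * c (k + (m : ℕ)) j : ℚ) : ℝ)
            * lam ^ (j : ℕ) * L := by
          simp only [Finset.mul_sum, neg_mul, mul_neg, ← Finset.sum_neg_distrib]
          rw [Finset.sum_comm]
          refine Finset.sum_congr rfl fun j _ => ?_
          push_cast
          rw [Finset.sum_mul, Finset.sum_mul]
          refine Finset.sum_congr rfl fun m _ => ?_
          ring
  set N : ℕ → ℚ := fun k => ∑ j : Fin d, α j * c k j with hN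
  have hNrec : ∀ k, N (k + d) = -∑ m : Fin d, (p.coeff (m : ℕ) : ℚ) * N (k + (m : ℕ)) := by
    intro k
    simp only [hN]
    calc ∑ j : Fin d, α j * c (k + d) j
        = ∑ j : Fin d, α j * (-∑ m : Fin d, (p.coeff (m : ℕ) : ℚ) * c (k + (m : ℕ)) j) :=
          Finset.sum_congr rfl fun j _ => by rw [hcrec k j]
      _ = -∑ m : Fin d, (p.coeff (m : ℕ) : ℚ) * ∑ j : Fin d, α j * c (k + (m : ℕ)) j := by
          simp only [mul_neg, Finset.mul_sum, ← Finset.sum_neg_distrib]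
          rw [Finset.sum_comm]
          exact Finset.sum_congr rfl fun m _ => Finset.sum_congr rfl fun j _ => by ring
  intro i
  have hdpos : 0 < d := i.pos
  obtain ⟨d', rfl⟩ := Nat.exists_eq_succ_of_ne_zero hdpos.ne'
  have main : ∀ n k, K ≤ k + n → ∃ (z : ℤ) (e : ℕ), N k = (z : ℚ) / (a0 : ℚ) ^ e := by
    intro n
    induction n with
    | zero =>
      intro k hk
      obtain ⟨z, hz⟩ := hint k (by omega) ⟨0, hdpos⟩
      refine ⟨z, 0, ?_⟩
      rw [pow_zero, div_one]
      simpa [hN] using hz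
    | succ n ih =>
      intro k hk
      have hrec := hNrec k
      rw [Fin.sum_univ_succ] at hrec
      simp only [Fin.val_zero, Fin.val_succ, add_zero] at hrec
      have key : (a0 : ℚ) * N k = -N (k + (d' + 1))
          - ∑ m : Fin d', (p.coeff ((m : ℕ) + 1) : ℚ) * N (k + ((m : ℕ) + 1)) := by
        rw [ha0]
        linarith [hrec]
      have hB := S_sum ha0ne (fun m : Fin d' => (p.coeff ((m : ℕ) + 1) : ℚ) * N (k + ((m : ℕ) + 1)))
        (fun m => S_intmul (ih (k + ((m : ℕ) + 1)) (by omega)))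
      obtain ⟨zA, eA, hA⟩ := ih (k + (d' + 1)) (by omega)
      obtain ⟨zB, eB, hB⟩ := hB
      have hS : ∃ (z : ℤ) (e : ℕ), (-N (k + (d' + 1))
          - ∑ m : Fin d', (p.coeff ((m : ℕ) + 1) : ℚ) * N (k + ((m : ℕ) + 1)))
            = (z : ℚ) / (a0 : ℚ) ^ e := by
        have := S_add ha0ne (a := a0) (q := -N (k + (d' + 1)))
          (r := -(∑ m : Fin d', (p.coeff ((m : ℕ) + 1) : ℚ) * N (k + ((m : ℕ) + 1))))
          ⟨-zA, eA, by rw [hA]; push_cast; ring⟩ ⟨-zB, eB, by rw [hB]; push_cast; ring⟩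
        simpa [sub_eq_add_neg] using this
      obtain ⟨z, e, hz⟩ := hS
      have hfin : N k * (a0 : ℚ) ^ (e + 1) = z := by
        rw [pow_succ]
        calc N k * ((a0 : ℚ) ^ e * (a0 : ℚ)) = ((a0 : ℚ) * N k) * (a0 : ℚ) ^ e := by ring
          _ = ((z : ℚ) / (a0 : ℚ) ^ e) * (a0 : ℚ) ^ e := by rw [key, hz]
          _ = z := div_mul_cancel₀ _ (pow_ne_zero _ ha0ne)
      exact ⟨z, e + 1, by rw [eq_div_iff (pow_ne_zero _ ha0ne), hfin]⟩
  have hdelta : ∀ j, c (i : ℕ) j = if j = i then 1 else 0 := by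
    refine hcoef (c (i : ℕ)) _ ((hc (i : ℕ)).symm.trans ?_)
    rw [show (∑ j : Fin (d' + 1), (((if j = i then 1 else 0 : ℚ)) : ℝ) * lam ^ (j : ℕ) * L)
        = ∑ j : Fin (d' + 1), (if j = i then lam ^ (j : ℕ) * L else 0) from
      Finset.sum_congr rfl fun j _ => by split <;> simp]
    rw [Finset.sum_ite_eq' Finset.univ i (fun j => lam ^ (j : ℕ) * L)]
    simp
  have hNi : N (i : ℕ) = α i := by
    simp only [hN]
    rw [show (∑ j : Fin (d' + 1), α j * c (i : ℕ) j)
        = ∑ j : Fin (d' + 1), (if j = i then α j else 0) from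
      Finset.sum_congr rfl fun j _ => by rw [hdelta j]; split <;> simp]
    rw [Finset.sum_ite_eq' Finset.univ i α]
    simp
  obtain ⟨z, e, hz⟩ := main K (i : ℕ) (by omega)
  exact ⟨z, e, by rw [← hNi, hz]⟩
end
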